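/- Consider the system ẋ = x(1-dx+cz), ẏ = y(-2+dx+ey-kz), ż = z(1+gx+kz) (Case 12 of (1:-2:1)-resonance: a=-d, b=0, f=-k, h=0, with cd-2dk-gk=0). Then ℓ₁ = 1-dx-(e/2)y+kz satisfies X(ℓ₁) = (-dx+ey+kz)ℓ₁ and ℓ₂ = 1-(e/2)y-(ed/2)xy+(ke/2)yz satisfies X(ℓ₂) = ey·ℓ₂, and the substitution Y = y·ℓ₁·ℓ₂^{-2} satisfies Ẏ = -2Y. -/

import Mathlib

set_option maxHeartbeats 2000000


/-- Case 12 of the `(1:-2:1)`-resonance classification: for the system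
`ẋ = x(1-dx+cz)`, `ẏ = y(-2+dx+ey-kz)`, `ż = z(1+gx+kz)` with `cd-2dk-gk = 0`, the
surfaces `ℓ₁ = 1-dx-(e/2)y+kz` and `ℓ₂ = 1-(e/2)y-(ed/2)xy+(ke/2)yz` satisfy
`X(ℓ₁) = (-dx+ey+kz)ℓ₁` and `X(ℓ₂) = ey ℓ₂`, and `Y = y ℓ₁ ℓ₂⁻²` satisfies
`Ẏ = -2Y` wherever `ℓ₂ ≠ 0`. -/
theorem stmt19 (c d e g k : ℝ) (hcond : c*d - 2*d*k - g*k = 0) :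
    ∀ x y z : ℝ,
      ((x*(1 - d*x + c*z)) * deriv (fun t => 1 - d*t - (e/2)*y + k*z) x
        + (y*(-2 + d*x + e*y - k*z)) * deriv (fun t => 1 - d*x - (e/2)*t + k*z) y
        + (z*(1 + g*x + k*z)) * deriv (fun t => 1 - d*x - (e/2)*y + k*t) z
        = (-(d*x) + e*y + k*z) * (1 - d*x - (e/2)*y + k*z))
      ∧
      ((x*(1 - d*x + c*z)) * deriv (fun t => 1 - (e/2)*y - (e*d/2)*t*y + (k*e/2)*y*z) x
        + (y*(-2 + d*x + e*y - k*z)) *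
          deriv (fun t => 1 - (e/2)*t - (e*d/2)*x*t + (k*e/2)*t*z) y
        + (z*(1 + g*x + k*z)) *
          deriv (fun t => 1 - (e/2)*y - (e*d/2)*x*y + (k*e/2)*y*t) z
        = (e*y) * (1 - (e/2)*y - (e*d/2)*x*y + (k*e/2)*y*z))
      ∧
      (1 - (e/2)*y - (e*d/2)*x*y + (k*e/2)*y*z ≠ 0 →
        (x*(1 - d*x + c*z)) *
            deriv (fun t => y * (1 - d*t - (e/2)*y + k*z)
              / (1 - (e/2)*y - (e*d/2)*t*y + (k*e/2)*y*z)^2) x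
          + (y*(-2 + d*x + e*y - k*z)) *
            deriv (fun t => t * (1 - d*x - (e/2)*t + k*z)
              / (1 - (e/2)*t - (e*d/2)*x*t + (k*e/2)*t*z)^2) y
          + (z*(1 + g*x + k*z)) *
            deriv (fun t => y * (1 - d*x - (e/2)*y + k*t)
              / (1 - (e/2)*y - (e*d/2)*x*y + (k*e/2)*y*t)^2) z
          = -2 * (y * (1 - d*x - (e/2)*y + k*z)
              / (1 - (e/2)*y - (e*d/2)*x*y + (k*e/2)*y*z)^2)) := by
  intro x y z
  -- part 1 derivatives
  have h1x : HasDerivAt (fun t : ℝ => 1 - d*t - (e/2)*y + k*z) (0 - d*1 - 0 + 0) x :=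
    (((hasDerivAt_const x (1:ℝ)).sub ((hasDerivAt_id x).const_mul d)).sub
      (hasDerivAt_const x ((e/2)*y))).add (hasDerivAt_const x (k*z))
  have h1y : HasDerivAt (fun t : ℝ => 1 - d*x - (e/2)*t + k*z) (0 - 0 - (e/2)*1 + 0) y :=
    (((hasDerivAt_const y (1:ℝ)).sub (hasDerivAt_const y (d*x))).sub
      ((hasDerivAt_id y).const_mul (e/2))).add (hasDerivAt_const y (k*z))
  have h1z : HasDerivAt (fun t : ℝ => 1 - d*x - (e/2)*y + k*t) (0 - 0 - 0 + k*1) z :=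
    (((hasDerivAt_const z (1:ℝ)).sub (hasDerivAt_const z (d*x))).sub
      (hasDerivAt_const z ((e/2)*y))).add ((hasDerivAt_id z).const_mul k)
  -- part 2 derivatives
  have h2x : HasDerivAt (fun t : ℝ => 1 - (e/2)*y - (e*d/2)*t*y + (k*e/2)*y*z)
      (0 - 0 - (e*d/2)*1*y + 0) x :=
    (((hasDerivAt_const x (1:ℝ)).sub (hasDerivAt_const x ((e/2)*y))).sub
      (((hasDerivAt_id x).const_mul (e*d/2)).mul_const y)).add (hasDerivAt_const x ((k*e/2)*y*z))
  have h2y : HasDerivAt (fun t : ℝ => 1 - (e/2)*t - (e*d/2)*x*t + (k*e/2)*t*z)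
      (0 - (e/2)*1 - (e*d/2)*x*1 + (k*e/2)*1*z) y :=
    (((hasDerivAt_const y (1:ℝ)).sub ((hasDerivAt_id y).const_mul (e/2))).sub
      ((hasDerivAt_id y).const_mul ((e*d/2)*x))).add
      (((hasDerivAt_id y).const_mul (k*e/2)).mul_const z)
  have h2z : HasDerivAt (fun t : ℝ => 1 - (e/2)*y - (e*d/2)*x*y + (k*e/2)*y*t)
      (0 - 0 - 0 + (k*e/2)*y*1) z :=
    (((hasDerivAt_const z (1:ℝ)).sub (hasDerivAt_const z ((e/2)*y))).sub
      (hasDerivAt_const z ((e*d/2)*x*y))).add ((hasDerivAt_id z).const_mul ((k*e/2)*y))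
  refine ⟨?_, ?_, ?_⟩
  · rw [h1x.deriv, h1y.deriv, h1z.deriv]
    linear_combination (-(x*z)) * hcond
  · rw [h2x.deriv, h2y.deriv, h2z.deriv]
    linear_combination (-(e/2)*x*y*z) * hcond
  · intro h
    have hne : (1 - (e/2)*y - (e*d/2)*x*y + (k*e/2)*y*z)^2 ≠ 0 := pow_ne_zero 2 h
    have hnx : HasDerivAt (fun t : ℝ => y * (1 - d*t - (e/2)*y + k*z)) (y * (0 - d*1 - 0 + 0)) x :=
      h1x.const_mul y
    have hny : HasDerivAt (fun t : ℝ => t * (1 - d*x - (e/2)*t + k*z))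
        (1 * (1 - d*x - (e/2)*y + k*z) + y * (0 - 0 - (e/2)*1 + 0)) y :=
      (hasDerivAt_id y).mul h1y
    have hnz : HasDerivAt (fun t : ℝ => y * (1 - d*x - (e/2)*y + k*t)) (y * (0 - 0 - 0 + k*1)) z :=
      h1z.const_mul y
    rw [(hnx.fun_div (h2x.fun_pow 2) hne).deriv, (hny.fun_div (h2y.fun_pow 2) hne).deriv,
        (hnz.fun_div (h2z.fun_pow 2) hne).deriv]
    have hne4 : ((1 - (e/2)*y - (e*d/2)*x*y + (k*e/2)*y*z)^2)^2 ≠ 0 := pow_ne_zero 2 hne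
    rw [mul_div_assoc', mul_div_assoc', mul_div_assoc', ← add_div, ← add_div,
      mul_div_assoc', div_eq_div_iff hne4 hne]
    linear_combination (x*y*z*(e*y*(1 - d*x - (e/2)*y + k*z)
      - (1 - (e/2)*y - (e*d/2)*x*y + (k*e/2)*y*z))
      * (1 - (e/2)*y - (e*d/2)*x*y + (k*e/2)*y*z)^3) * hcond
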